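/- arXiv:2410.03849 — 3 statements merged into one kernel-verified Lean document; each statement's English description precedes it below -/
import Mathlib

section
/- For every horizon T ≥ 1 and every nonempty class F of sequential experts, the minimax regret of sequential probability assignment equals the worst-case log contextual Shtarkov sum: R_T(F) = sup_x log S_T(F | x), where the supremum ranges over all context trees x of depth T and the equality holds in the extended reals. -/
open scoped BigOperators

/-- The probability simplex on a finite label set `Y`. -/
abbrev Simplex (Y : Type*) [Fintype Y] :=
  {p : Y → ℝ // (∀ y, 0 ≤ p y) ∧ ∑ y, p y = 1}

/-- A sequential expert: given contexts `x₁,…,x_t` (a list of length `t`) and past labels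
`y₁,…,y_{t-1}` (a list of length `t-1`), it predicts a distribution over labels. -/
abbrev Expert (X Y : Type*) [Fintype Y] := List X → List Y → Simplex Y

/-- `-log x` as an extended real, with `-log 0 = ⊤` (and junk value `⊤` for `x < 0`). -/
noncomputable def negLog (x : ℝ) : EReal :=
  if x ≤ 0 then ⊤ else ((-Real.log x : ℝ) : EReal)

/-- `log x` as an extended real, with `log 0 = ⊥` (and junk value `⊥` for `x < 0`). -/
noncomputable def elog (x : ℝ) : EReal :=
  if x ≤ 0 then ⊥ else ((Real.log x : ℝ) : EReal)

/-- The logarithmic loss `ℓ(p, y) = -log p(y) ∈ [0, ∞]`. -/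
noncomputable def logloss {Y : Type*} [Fintype Y] (p : Simplex Y) (y : Y) : EReal :=
  negLog (p.1 y)

/-- Likelihood of expert `f` on a context sequence `xs` and a label sequence `ys`
of the same length: `L(f; y_{1:d} | x_{1:d}) = ∏_{t=1}^d f(x_{1:t}, y_{1:t-1})(y_t)`. -/
noncomputable def likelihood {X Y : Type*} [Fintype Y] [Inhabited Y]
    (f : Expert X Y) (xs : List X) (ys : List Y) : ℝ :=
  ∏ t ∈ Finset.range ys.length, (f (xs.take (t + 1)) (ys.take t)).1 (ys.getD t default)

/-- Cumulative log loss of expert `f` on `xs`, `ys`: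
`Σ_{t=1}^d ℓ(f(x_{1:t}, y_{1:t-1}), y_t)`. -/
noncomputable def cumLoss {X Y : Type*} [Fintype Y] [Inhabited Y]
    (f : Expert X Y) (xs : List X) (ys : List Y) : EReal :=
  ∑ t ∈ Finset.range ys.length, logloss (f (xs.take (t + 1)) (ys.take t)) (ys.getD t default)

/-- A context tree of depth `T` is modelled as a map `χ : List Y → X` (only its values on
lists of length `< T` matter): `x_t(y) = χ (y_{1:t-1})`.  `treePath χ ys` is the context
sequence `x(y) = (x_1, x_2(y_1), …)` obtained by tracing the tree along the path `ys`. -/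
def treePath {X Y : Type*} (χ : List Y → X) (ys : List Y) : List X :=
  (List.range ys.length).map fun t => χ (ys.take t)

/-- The contextual Shtarkov sum of `F` on a context tree `χ` of depth `r`, with prefix
`xs ∈ X^t`, `ys ∈ Y^t`:
`S_T(F, χ | x_{1:t}, y_{1:t}) = Σ_{y ∈ Y^r} sup_{f ∈ F} L(f; (y_{1:t}, y) | (x_{1:t}, χ(y)))`. -/
noncomputable def shtarkovPrefix {X Y : Type*} [Fintype Y] [Inhabited Y]
    (F : Set (Expert X Y)) (r : ℕ) (χ : List Y → X) (xs : List X) (ys : List Y) : ℝ :=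
  ∑ y : Fin r → Y, ⨆ f : F,
    likelihood (f : Expert X Y) (xs ++ treePath χ (List.ofFn y)) (ys ++ List.ofFn y)

/-- The contextual Shtarkov sum `S_T(F | χ) = Σ_{y ∈ Y^T} sup_{f ∈ F} L(f; y | χ(y))`. -/
noncomputable def shtarkov {X Y : Type*} [Fintype Y] [Inhabited Y]
    (F : Set (Expert X Y)) (T : ℕ) (χ : List Y → X) : ℝ :=
  shtarkovPrefix F T χ [] []

/-- The extensive-form game value with `r` rounds to go, given past contexts `xs`, past
labels `ys`, and accumulated learner loss `acc`:
`sup_{x} inf_{p̂} sup_{y} ⋯ [ acc + Σ ℓ(p̂_s, y_s) − inf_{f ∈ F} Σ_{s=1}^T ℓ(f, y_s) ]`. -/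
noncomputable def valToGo {X Y : Type*} [Fintype Y] [Inhabited Y]
    (F : Set (Expert X Y)) : ℕ → List X → List Y → EReal → EReal
  | 0, xs, ys, acc => acc - ⨅ f : F, cumLoss (f : Expert X Y) xs ys
  | r + 1, xs, ys, acc =>
      ⨆ x : X, ⨅ p : Simplex Y, ⨆ y : Y,
        valToGo F r (xs ++ [x]) (ys ++ [y]) (acc + logloss p y)

/-- The minimax regret
`R_T(F) = sup_{x_1} inf_{p̂_1} sup_{y_1} ⋯ sup_{x_T} inf_{p̂_T} sup_{y_T} R_T(F; p̂, x, y)`. -/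
noncomputable def minimaxRegret {X Y : Type*} [Fintype Y] [Inhabited Y]
    (F : Set (Expert X Y)) (T : ℕ) : EReal :=
  valToGo F T [] [] 0

/-- Nested conditional expectation over a probabilistic tree `π`, for `r` remaining rounds:
`E_{y_1 ∼ π([])} E_{y_2 ∼ π(y_{1:1})} ⋯ [g(y_{1:r})]`. -/
noncomputable def expTree {Y : Type*} [Fintype Y] (π : List Y → Simplex Y)
    (g : List Y → EReal) : ℕ → List Y → EReal
  | 0, pre => g pre
  | r + 1, pre => ∑ y : Y, ((π pre).1 y : EReal) * expTree π g r (pre ++ [y])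

/-- The dual (max-min) value-to-go `W(F, x_{1:t}, y_{1:t})`: the supremum over context trees
`χ` and probabilistic trees `π` of depth `r = T - t` of
`E_{y∼π}[ Σ_{s=t+1}^T ℓ(π_s(y), y_s) − inf_{f ∈ F} Σ_{s=1}^T ℓ(f, y_s) ]`. -/
noncomputable def dualValToGo {X Y : Type*} [Fintype Y] [Inhabited Y]
    (F : Set (Expert X Y)) (r : ℕ) (xs : List X) (ys : List Y) : EReal :=
  ⨆ χ : List Y → X, ⨆ π : List Y → Simplex Y,
    expTree π (fun suf =>
      (∑ s ∈ Finset.range r, logloss (π (suf.take s)) (suf.getD s default)) -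
        ⨅ f : F, cumLoss (f : Expert X Y) (xs ++ treePath χ suf) (ys ++ suf)) r []

/-- The dual (max-min) value `V_T(F)`. -/
noncomputable def dualValue {X Y : Type*} [Fintype Y] [Inhabited Y]
    (F : Set (Expert X Y)) (T : ℕ) : EReal :=
  dualValToGo F T [] []


section SAux

open ENNReal

variable {X Y : Type*} [Fintype Y] [Inhabited Y]

lemma simplex_le_one (p : Simplex Y) (y : Y) : p.1 y ≤ 1 := by
  have h := Finset.single_le_sum (f := p.1) (fun z _ => p.2.1 z) (Finset.mem_univ y)
  simpa [p.2.2] using h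

/-- uniform distribution -/
noncomputable def unif (Y : Type*) [Fintype Y] [Inhabited Y] : Simplex Y := by
  refine ⟨fun _ => (Fintype.card Y : ℝ)⁻¹, fun y => by positivity, ?_⟩
  have hc : (0:ℝ) < Fintype.card Y := by exact_mod_cast Fintype.card_pos
  rw [Finset.sum_const, Finset.card_univ, nsmul_eq_mul]
  field_simp

lemma unif_pos (y : Y) : 0 < (unif Y).1 y := by
  have hc : (0:ℝ) < Fintype.card Y := by exact_mod_cast Fintype.card_pos
  simp only [unif]
  positivity

instance : Nonempty (Simplex Y) := ⟨unif Y⟩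

lemma likelihood_nonneg {X : Type*} (f : Expert X Y) (xs : List X) (ys : List Y) :
    0 ≤ likelihood f xs ys :=
  Finset.prod_nonneg fun _ _ => (f _ _).2.1 _

lemma likelihood_le_one {X : Type*} (f : Expert X Y) (xs : List X) (ys : List Y) :
    likelihood f xs ys ≤ 1 :=
  Finset.prod_le_one (fun _ _ => (f _ _).2.1 _) (fun _ _ => simplex_le_one _ _)

lemma negLog_ne_bot (x : ℝ) : negLog x ≠ ⊥ := by
  rw [negLog]; split_ifs
  · simp
  · exact EReal.coe_ne_bot _

lemma negLog_eq (x : ℝ) : negLog x = - ENNReal.log (ENNReal.ofReal x) := by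
  rw [negLog, ENNReal.log_ofReal]
  split_ifs with h
  · simp
  · exact EReal.coe_neg _

lemma elog_eq (x : ℝ) : elog x = ENNReal.log (ENNReal.ofReal x) := by
  rw [elog, ENNReal.log_ofReal]

lemma negLog_mul {a b : ℝ} (ha : 0 ≤ a) (hb : 0 ≤ b) :
    negLog (a * b) = negLog a + negLog b := by
  rcases ha.eq_or_lt with ha0 | ha0
  · rw [← ha0, zero_mul]
    rw [show negLog 0 = ⊤ by rw [negLog, if_pos le_rfl]]
    rw [EReal.top_add_of_ne_bot (negLog_ne_bot b)]
  rcases hb.eq_or_lt with hb0 | hb0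
  · rw [← hb0, mul_zero]
    rw [show negLog 0 = ⊤ by rw [negLog, if_pos le_rfl]]
    rw [EReal.add_top_of_ne_bot (negLog_ne_bot a)]
  · have hab : 0 < a * b := mul_pos ha0 hb0
    rw [negLog, if_neg (not_le.2 hab), negLog, if_neg (not_le.2 ha0), negLog,
      if_neg (not_le.2 hb0), Real.log_mul ha0.ne' hb0.ne',
      show -(Real.log a + Real.log b) = -Real.log a + -Real.log b by ring, EReal.coe_add]

lemma negLog_prod {ι : Type*} (s : Finset ι) (a : ι → ℝ) (h : ∀ i ∈ s, 0 ≤ a i) :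
    ∑ i ∈ s, negLog (a i) = negLog (∏ i ∈ s, a i) := by
  induction s using Finset.cons_induction with
  | empty => norm_num [negLog]
  | cons i s hi ih =>
    rw [Finset.sum_cons, Finset.prod_cons,
      negLog_mul (h i (Finset.mem_cons_self i s))
        (Finset.prod_nonneg fun j hj => h j (Finset.mem_cons_of_mem hj)),
      ih (fun j hj => h j (Finset.mem_cons_of_mem hj))]

lemma cumLoss_eq {X : Type*} (f : Expert X Y) (xs : List X) (ys : List Y) :
    cumLoss f xs ys = negLog (likelihood f xs ys) := by
  unfold cumLoss likelihood logloss
  exact negLog_prod _ _ (fun t _ => (f _ _).2.1 _)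

lemma ereal_neg_iInf {ι : Sort*} (f : ι → EReal) : -(⨅ i, f i) = ⨆ i, -f i := by
  apply le_antisymm
  · rw [EReal.neg_le]
    exact le_iInf fun i => EReal.neg_le.mp (le_iSup (fun j => -f j) i)
  · exact iSup_le fun i => EReal.neg_le_neg_iff.mpr (iInf_le f i)

lemma ereal_iInf_neg {ι : Sort*} (f : ι → EReal) : ⨅ i, -f i = -(⨆ i, f i) := by
  have h := ereal_neg_iInf (fun i => - f i)
  simp only [neg_neg] at h
  rw [← h, neg_neg]

lemma ereal_add_iSup {ι : Sort*} [Nonempty ι] (a : EReal) (f : ι → EReal) :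
    a + ⨆ i, f i = ⨆ i, a + f i := by
  apply le_antisymm _ (iSup_le fun i => add_le_add (le_refl a) (le_iSup f i))
  induction a with
  | bot => rw [EReal.bot_add]; exact bot_le
  | coe x =>
    have hc : ContinuousAt (fun z : EReal => (x : EReal) + z) (⨆ i, f i) := by
      have h1 : ContinuousAt (fun p : EReal × EReal => p.1 + p.2) ((x : EReal), ⨆ i, f i) :=
        EReal.continuousAt_add (Or.inl (EReal.coe_ne_top x)) (Or.inl (EReal.coe_ne_bot x))
      exact h1.comp ((continuous_const.prodMk continuous_id).continuousAt)
    exact le_of_eq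
      (Monotone.map_iSup_of_continuousAt hc (fun u v huv => add_le_add (le_refl _) huv)
        (EReal.add_bot _))
  | top =>
    by_cases h : ∀ i, f i = ⊥
    · rw [iSup_eq_bot.2 h, EReal.add_bot]; exact bot_le
    · push_neg at h
      obtain ⟨i, hi⟩ := h
      exact le_top.trans (le_iSup_of_le i (le_of_eq (EReal.top_add_of_ne_bot hi).symm))

lemma ofReal_ciSup {ι : Sort*} [Nonempty ι] (g : ι → ℝ) (h1 : ∀ i, g i ≤ 1) :
    ENNReal.ofReal (⨆ i, g i) = ⨆ i, ENNReal.ofReal (g i) := by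
  refine Monotone.map_ciSup_of_continuousAt ENNReal.continuous_ofReal.continuousAt
    (fun a b hab => ENNReal.ofReal_le_ofReal hab) ⟨1, ?_⟩
  rintro x ⟨i, rfl⟩
  exact h1 i

lemma log_iSup {ι : Sort*} (w : ι → ℝ≥0∞) :
    ENNReal.log (⨆ i, w i) = ⨆ i, ENNReal.log (w i) := by
  exact OrderIso.map_iSup ENNReal.logOrderIso w

lemma ennreal_sum_iSup {ι κ : Type*} [Nonempty κ] (s : Finset ι) (A : ι → κ → ℝ≥0∞) :
    ∑ i ∈ s, ⨆ k, A i k = ⨆ g : ι → κ, ∑ i ∈ s, A i (g i) := by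
  classical
  induction s using Finset.cons_induction with
  | empty => simp
  | cons a s ha ih =>
    rw [Finset.sum_cons, ih, ENNReal.iSup_add]
    simp_rw [ENNReal.add_iSup]
    apply le_antisymm
    · refine iSup_le fun k => iSup_le fun g => ?_
      refine le_iSup_of_le (Function.update g a k) (le_of_eq ?_)
      rw [Finset.sum_cons, Function.update_self]
      congr 1
      refine Finset.sum_congr rfl fun i hi => ?_
      rw [Function.update_of_ne (by rintro rfl; exact ha hi)]
    · refine iSup_le fun g => ?_
      rw [Finset.sum_cons]
      exact le_iSup_of_le (g a) (le_iSup_of_le g le_rfl)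

lemma shtarkov_lb (w : Y → ℝ≥0∞) (p : Simplex Y) :
    ENNReal.log (∑ y, w y) ≤ ⨆ y : Y, (logloss p y + ENNReal.log (w y)) := by
  simp only [logloss]
  rcases eq_or_ne (∑ y, w y) ⊤ with hS | hS
  · obtain ⟨y, -, hy⟩ := ENNReal.sum_eq_top.mp hS
    refine le_iSup_of_le y ?_
    rw [hy, ENNReal.log_top, EReal.add_top_of_ne_bot (negLog_ne_bot _)]
    exact le_top
  rcases eq_or_ne (∑ y, w y) 0 with hS0 | hS0
  · rw [hS0, ENNReal.log_zero]; exact bot_le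
  have hex : ∃ y, w y ≠ 0 ∧ ENNReal.ofReal (p.1 y) ≤ w y / ∑ z, w z := by
    by_contra hc
    push_neg at hc
    have hwt : ∀ z, w z ≠ ⊤ := fun z h =>
      hS (top_le_iff.1
        (h ▸ Finset.single_le_sum (f := w) (fun u _ => zero_le) (Finset.mem_univ z)))
    have hSR : (∑ z, w z).toReal = ∑ z, (w z).toReal :=
      ENNReal.toReal_sum (fun z _ => hwt z)
    have hSpos : 0 < (∑ z, w z).toReal := ENNReal.toReal_pos hS0 hS
    obtain ⟨y0, hy0⟩ : ∃ y, w y ≠ 0 := by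
      by_contra h0; push_neg at h0
      exact hS0 (Finset.sum_eq_zero fun y _ => h0 y)
    have hkey : ∀ y, w y ≠ 0 → (w y).toReal < p.1 y * (∑ z, w z).toReal := by
      intro y hy
      have h1 : w y < ENNReal.ofReal (p.1 y) * ∑ z, w z :=
        (ENNReal.div_lt_iff (Or.inl hS0) (Or.inl hS)).mp (hc y hy)
      have h2 : (w y).toReal < (ENNReal.ofReal (p.1 y) * ∑ z, w z).toReal :=
        (ENNReal.toReal_lt_toReal (hwt y)
          (ENNReal.mul_ne_top ENNReal.ofReal_ne_top hS)).mpr h1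
      rwa [ENNReal.toReal_mul, ENNReal.toReal_ofReal (p.2.1 y)] at h2
    have hlt : ∑ z, (w z).toReal < ∑ y, p.1 y * (∑ z, w z).toReal := by
      refine Finset.sum_lt_sum (fun y _ => ?_) ⟨y0, Finset.mem_univ y0, ?_⟩
      · rcases eq_or_ne (w y) 0 with h | h
        · rw [h]
          simpa using mul_nonneg (p.2.1 y) hSpos.le
        · exact (hkey y h).le
      · exact hkey y0 hy0
    rw [← Finset.sum_mul, p.2.2, one_mul, ← hSR] at hlt
    exact lt_irrefl _ hlt
  obtain ⟨y, hy0, hy⟩ := hex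
  refine le_iSup_of_le y ?_
  rcases (p.2.1 y).eq_or_lt with hp0 | hppos
  · rw [negLog, if_pos hp0.symm.le,
      EReal.top_add_of_ne_bot (by simp [ENNReal.log_eq_bot_iff, hy0])]
    exact le_top
  · have hwy_top : w y ≠ ⊤ := by
      intro h
      exact hS (top_le_iff.1
        (h ▸ Finset.single_le_sum (f := w) (fun z _ => zero_le) (Finset.mem_univ y)))
    have hSpos : 0 < (∑ z, w z).toReal := ENNReal.toReal_pos hS0 hS
    have hwpos : 0 < (w y).toReal := ENNReal.toReal_pos hy0 hwy_top
    have hple : p.1 y ≤ (w y).toReal / (∑ z, w z).toReal := by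
      have h1 : (ENNReal.ofReal (p.1 y)).toReal ≤ (w y / ∑ z, w z).toReal :=
        ENNReal.toReal_mono (ENNReal.div_lt_top hwy_top hS0).ne hy
      rwa [ENNReal.toReal_ofReal (p.2.1 y), ENNReal.toReal_div] at h1
    rw [negLog, if_neg (not_le.2 hppos), ENNReal.log_pos_real hy0 hwy_top,
      ENNReal.log_pos_real hS0 hS, ← EReal.coe_add, EReal.coe_le_coe_iff]
    have hlog := Real.log_le_log hppos hple
    rw [Real.log_div hwpos.ne' hSpos.ne'] at hlog
    linarith

lemma shtarkov_attain (w : Y → ℝ≥0∞) :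
    ∃ p : Simplex Y, (⨆ y : Y, (logloss p y + ENNReal.log (w y))) ≤ ENNReal.log (∑ y, w y) := by
  rcases eq_or_ne (∑ y, w y) ⊤ with hS | hS
  · exact ⟨unif Y, by rw [hS, ENNReal.log_top]; exact le_top⟩
  rcases eq_or_ne (∑ y, w y) 0 with hS0 | hS0
  · refine ⟨unif Y, iSup_le fun y => ?_⟩
    have hw : w y = 0 := by
      have := (Finset.sum_eq_zero_iff).mp hS0
      exact this y (Finset.mem_univ y)
    rw [hw, ENNReal.log_zero, EReal.add_bot]
    exact bot_le
  · have hwt : ∀ y, w y ≠ ⊤ := by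
      intro y h
      exact hS (top_le_iff.1
        (h ▸ Finset.single_le_sum (f := w) (fun z _ => zero_le) (Finset.mem_univ y)))
    have hsum : ∑ y, (w y / ∑ z, w z).toReal = 1 := by
      rw [← ENNReal.toReal_sum (fun y _ => (ENNReal.div_lt_top (hwt y) hS0).ne)]
      have h2 : ∑ y, w y / ∑ z, w z = 1 := by
        simp only [div_eq_mul_inv]
        rw [← Finset.sum_mul, ENNReal.mul_inv_cancel hS0 hS]
      rw [h2, ENNReal.toReal_one]
    refine ⟨⟨fun y => (w y / ∑ z, w z).toReal, fun y => ENNReal.toReal_nonneg, hsum⟩,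
      iSup_le fun y => ?_⟩
    simp only [logloss]
    rcases eq_or_ne (w y) 0 with hw | hw
    · rw [hw, ENNReal.log_zero, EReal.add_bot]
      exact bot_le
    · have hSpos : 0 < (∑ z, w z).toReal := ENNReal.toReal_pos hS0 hS
      have hwpos : 0 < (w y).toReal := ENNReal.toReal_pos hw (hwt y)
      have hpos : 0 < (w y / ∑ z, w z).toReal := by
        rw [ENNReal.toReal_div]
        positivity
      refine le_of_eq ?_
      rw [negLog, if_neg (not_le.2 hpos), ENNReal.log_pos_real hw (hwt y),
        ENNReal.log_pos_real hS0 hS, ← EReal.coe_add, EReal.coe_eq_coe_iff,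
        ENNReal.toReal_div, Real.log_div hwpos.ne' hSpos.ne']
      ring

lemma shtarkov_iInf (acc : EReal) (w : Y → ℝ≥0∞) :
    (⨅ p : Simplex Y, ⨆ y : Y, (acc + (logloss p y + ENNReal.log (w y))))
      = acc + ENNReal.log (∑ y, w y) := by
  obtain ⟨p₀, hp₀⟩ := shtarkov_attain w
  apply le_antisymm
  · refine iInf_le_of_le p₀ ?_
    rw [← ereal_add_iSup]
    exact add_le_add (le_refl acc) hp₀
  · refine le_iInf fun p => ?_
    rw [← ereal_add_iSup]
    exact add_le_add (le_refl acc) (shtarkov_lb w p)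

noncomputable def eLik {X : Type*} (F : Set (Expert X Y)) (xs : List X) (ys : List Y) : ℝ≥0∞ :=
  ⨆ f : F, ENNReal.ofReal (likelihood (f : Expert X Y) xs ys)

lemma ofReal_supLik {X : Type*} (F : Set (Expert X Y)) (hF : F.Nonempty)
    (xs : List X) (ys : List Y) :
    ENNReal.ofReal (⨆ f : F, likelihood (f : Expert X Y) xs ys) = eLik F xs ys := by
  haveI := hF.to_subtype
  exact ofReal_ciSup _ (fun f => likelihood_le_one _ _ _)

lemma iInf_cumLoss {X : Type*} (F : Set (Expert X Y)) (hF : F.Nonempty)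
    (xs : List X) (ys : List Y) :
    ⨅ f : F, cumLoss (f : Expert X Y) xs ys = - ENNReal.log (eLik F xs ys) := by
  haveI := hF.to_subtype
  have h1 : ∀ f : F, cumLoss (f : Expert X Y) xs ys
      = - ENNReal.log (ENNReal.ofReal (likelihood (f : Expert X Y) xs ys)) := fun f => by
    rw [cumLoss_eq, negLog_eq]
  simp_rw [h1]
  rw [ereal_iInf_neg, ← log_iSup]
  rfl

noncomputable def eSh {X : Type*} (F : Set (Expert X Y)) (r : ℕ) (χ : List Y → X)
    (xs : List X) (ys : List Y) : ℝ≥0∞ :=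
  ∑ y : Fin r → Y, eLik F (xs ++ treePath χ (List.ofFn y)) (ys ++ List.ofFn y)

lemma ofReal_shtarkovPrefix {X : Type*} (F : Set (Expert X Y)) (hF : F.Nonempty)
    (r : ℕ) (χ : List Y → X) (xs : List X) (ys : List Y) :
    ENNReal.ofReal (shtarkovPrefix F r χ xs ys) = eSh F r χ xs ys := by
  haveI := hF.to_subtype
  rw [shtarkovPrefix, ENNReal.ofReal_sum_of_nonneg
    (fun y _ => Real.iSup_nonneg fun f => likelihood_nonneg _ _ _)]
  exact Finset.sum_congr rfl fun y _ => ofReal_supLik F hF _ _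

lemma elog_shtarkovPrefix {X : Type*} (F : Set (Expert X Y)) (hF : F.Nonempty)
    (r : ℕ) (χ : List Y → X) (xs : List X) (ys : List Y) :
    elog (shtarkovPrefix F r χ xs ys) = ENNReal.log (eSh F r χ xs ys) := by
  rw [elog_eq, ofReal_shtarkovPrefix F hF]

lemma treePath_cons {X : Type*} (χ : List Y → X) (y0 : Y) (l : List Y) :
    treePath χ (y0 :: l) = χ [] :: treePath (fun l' => χ (y0 :: l')) l := by
  simp [treePath, List.range_succ_eq_map, List.map_map, Function.comp_def]

lemma sum_pi_succ {M : Type*} [AddCommMonoid M] {r : ℕ} (g : (Fin (r+1) → Y) → M) :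
    ∑ y : Fin (r+1) → Y, g y = ∑ y0 : Y, ∑ y' : Fin r → Y, g (Fin.cons y0 y') := by
  have h := Fintype.sum_equiv (Fin.consEquiv fun _ : Fin (r+1) => Y)
    (fun p => g (Fin.cons p.1 p.2)) g (fun p => rfl)
  rw [← h, Fintype.sum_prod_type]

lemma eSh_succ {X : Type*} (F : Set (Expert X Y)) (r : ℕ) (χ : List Y → X)
    (xs : List X) (ys : List Y) :
    eSh F (r+1) χ xs ys
      = ∑ y0 : Y, eSh F r (fun l => χ (y0 :: l)) (xs ++ [χ []]) (ys ++ [y0]) := by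
  rw [eSh, sum_pi_succ]
  refine Finset.sum_congr rfl fun y0 _ => ?_
  rw [eSh]
  refine Finset.sum_congr rfl fun y' _ => ?_
  have hofn : List.ofFn (Fin.cons y0 y' : Fin (r+1) → Y) = y0 :: List.ofFn y' := by
    simp [List.ofFn_succ]
  rw [hofn, treePath_cons, List.append_cons xs, List.append_cons ys]

lemma valToGo_eq {X : Type*} [Nonempty X] (F : Set (Expert X Y)) (hF : F.Nonempty) :
    ∀ (r : ℕ) (xs : List X) (ys : List Y) (acc : EReal),
      valToGo F r xs ys acc = acc + ⨆ χ : List Y → X, ENNReal.log (eSh F r χ xs ys)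
  | 0, xs, ys, acc => by
    rw [valToGo]
    have h0 : ∀ χ : List Y → X, eSh F 0 χ xs ys = eLik F xs ys := fun χ => by
      simp [eSh, treePath]
    simp_rw [h0]
    rw [iSup_const, iInf_cumLoss F hF, sub_eq_add_neg, neg_neg]
  | r+1, xs, ys, acc => by
    rw [valToGo]
    have step1 : ∀ (x : X) (p : Simplex Y) (y : Y),
        valToGo F r (xs ++ [x]) (ys ++ [y]) (acc + logloss p y)
          = acc + (logloss p y
              + ENNReal.log (⨆ χ : List Y → X, eSh F r χ (xs ++ [x]) (ys ++ [y]))) := by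
      intro x p y
      rw [valToGo_eq F hF r, log_iSup, add_assoc]
    simp_rw [step1]
    have step2 : ∀ x : X,
        (⨅ p : Simplex Y, ⨆ y : Y, (acc + (logloss p y
            + ENNReal.log (⨆ χ : List Y → X, eSh F r χ (xs ++ [x]) (ys ++ [y])))))
          = acc + ENNReal.log (∑ y : Y, ⨆ χ : List Y → X, eSh F r χ (xs ++ [x]) (ys ++ [y])) :=
      fun x => shtarkov_iInf acc _
    simp_rw [step2]
    rw [← ereal_add_iSup]
    congr 1
    rw [← log_iSup, ← log_iSup]
    congr 1
    simp_rw [eSh_succ]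
    have hsum : ∀ x : X, (∑ y : Y, ⨆ χ : List Y → X, eSh F r χ (xs ++ [x]) (ys ++ [y]))
        = ⨆ g : Y → (List Y → X), ∑ y : Y, eSh F r (g y) (xs ++ [x]) (ys ++ [y]) :=
      fun x => ennreal_sum_iSup Finset.univ _
    simp_rw [hsum]
    apply le_antisymm
    · refine iSup_le fun x => iSup_le fun g => ?_
      refine le_iSup_of_le
        (fun l => match l with | [] => x | y :: l' => g y l') (le_of_eq ?_)
      exact Finset.sum_congr rfl fun y _ => rfl
    · refine iSup_le fun χ => ?_
      exact le_iSup_of_le (χ []) (le_iSup_of_le (fun y l => χ (y :: l)) le_rfl)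
  termination_by r => r

end SAux

/-- For every horizon `T ≥ 1` and every nonempty class `F` of sequential
experts, the minimax regret equals the worst-case log contextual Shtarkov sum:
`R_T(F) = sup_χ log S_T(F | χ)`, supremum over all context trees of depth `T`,
in the extended reals. -/
theorem minimaxRegret_eq_sup_log_shtarkov
    {X Y : Type*} [Fintype Y] [Inhabited Y] [Nonempty X]
    (F : Set (Expert X Y)) (hF : F.Nonempty) (T : ℕ) (hT : 1 ≤ T) :
    minimaxRegret F T = ⨆ χ : List Y → X, elog (shtarkov F T χ) := by
  have h := valToGo_eq F hF T [] [] 0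
  rw [minimaxRegret, h, zero_add]
  exact iSup_congr fun χ => (elog_shtarkovPrefix F hF T χ [] []).symm
end

section
/- Let H be a real Hilbert space, T ≥ 1, and let x_1, …, x_T ∈ H be orthonormal vectors. For the linear class F^Lin = { x ↦ (⟨w, x⟩ + 1)/2 : w in the closed unit ball of H } with binary labels, the conditional Shtarkov sum on the context sequence x_{1:T} satisfies S_T(F^Lin | x_{1:T}) ≥ (1 + 1/√T)^T; consequently log S_T(F^Lin | x_{1:T}) ≥ T·log(1 + 1/√T) ≥ √T/4. -/
open scoped BigOperators RealInnerProductSpace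

/-- The conditional Shtarkov sum of the linear class
`F^Lin = { x ↦ (⟨w, x⟩ + 1)/2 : ‖w‖ ≤ 1 }` (with binary labels, where `f ∈ F^Lin` predicts
the Bernoulli distribution with mean `f(x)`) on a context sequence `x_1, …, x_T`:
`S_T(F^Lin | x_{1:T}) = Σ_{y ∈ {0,1}^T} sup_{‖w‖ ≤ 1} ∏_t f_w(x_t)^{y_t}(1 − f_w(x_t))^{1−y_t}`. -/
noncomputable def linShtarkov {H : Type*} [NormedAddCommGroup H] [InnerProductSpace ℝ H]
    (T : ℕ) (x : Fin T → H) : ℝ :=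
  ∑ y : Fin T → Bool, ⨆ w : {w : H // ‖w‖ ≤ 1},
    ∏ t : Fin T,
      (if y t then (⟪(w : H), x t⟫ + 1) / 2 else 1 - (⟪(w : H), x t⟫ + 1) / 2)

/-- Let `H` be a real Hilbert space, `T ≥ 1`, and `x_1, …, x_T ∈ H`
orthonormal.  Then the conditional Shtarkov sum of the linear class `F^Lin` on `x_{1:T}`
satisfies `S_T(F^Lin | x_{1:T}) ≥ (1 + 1/√T)^T`; consequently
`log S_T(F^Lin | x_{1:T}) ≥ T·log(1 + 1/√T) ≥ √T/4`. -/
theorem linShtarkov_lower_bound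
    {H : Type*} [NormedAddCommGroup H] [InnerProductSpace ℝ H] [CompleteSpace H]
    (T : ℕ) (hT : 1 ≤ T) (x : Fin T → H) (hx : Orthonormal ℝ x) :
    (1 + 1 / Real.sqrt T) ^ T ≤ linShtarkov T x ∧
    (T : ℝ) * Real.log (1 + 1 / Real.sqrt T) ≤ Real.log (linShtarkov T x) ∧
    Real.sqrt T / 4 ≤ Real.log (linShtarkov T x) := by
  have hT0 : (0 : ℝ) < T := by exact_mod_cast hT
  have hs : (1 : ℝ) ≤ Real.sqrt T := by
    rw [show (1:ℝ) = Real.sqrt 1 by simp]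
    exact Real.sqrt_le_sqrt (by exact_mod_cast hT)
  have hs0 : (0 : ℝ) < Real.sqrt T := lt_of_lt_of_le one_pos hs
  set u : ℝ := 1 / Real.sqrt T with hu
  have hu0 : 0 < u := by positivity
  have hu1 : u ≤ 1 := by rw [hu, div_le_one hs0]; exact hs
  -- the key lower bound on each supremum
  have key : ∀ y : Fin T → Bool,
      ((1 + u) / 2) ^ T ≤ ⨆ w : {w : H // ‖w‖ ≤ 1},
        ∏ t : Fin T,
          (if y t then (⟪(w : H), x t⟫ + 1) / 2 else 1 - (⟪(w : H), x t⟫ + 1) / 2) := by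
    intro y
    set l : Fin T → ℝ := fun t => if y t then u else -u with hl
    set w₀ : H := ∑ t : Fin T, l t • x t with hw₀
    have hnorm : ‖w₀‖ ≤ 1 := by
      have h1 : ⟪w₀, w₀⟫ = ∑ t : Fin T, l t * l t := by
        simpa using hx.inner_sum l l Finset.univ
      have h2 : ∀ t, l t * l t = u ^ 2 := by
        intro t; by_cases h : y t <;> simp [hl, h] <;> ring
      have h3 : ⟪w₀, w₀⟫ = (T : ℝ) * u ^ 2 := by
        rw [h1]; simp [h2]
      have h4 : ‖w₀‖ ^ 2 = (T : ℝ) * u ^ 2 := by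
        rw [← h3, real_inner_self_eq_norm_sq]
      have h5 : (T : ℝ) * u ^ 2 = 1 := by
        rw [hu]; field_simp; rw [Real.sq_sqrt hT0.le]
      have : ‖w₀‖ ^ 2 = 1 := by rw [h4, h5]
      nlinarith [norm_nonneg w₀]
    have hinner : ∀ t, ⟪w₀, x t⟫ = l t := by
      intro t
      simpa using hx.inner_left_fintype l t
    have hval : ∏ t : Fin T,
        (if y t then (⟪w₀, x t⟫ + 1) / 2 else 1 - (⟪w₀, x t⟫ + 1) / 2)
        = ((1 + u) / 2) ^ T := by
      rw [Finset.prod_congr rfl (fun t _ => ?_), Finset.prod_const, Finset.card_univ,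
        Fintype.card_fin]
      by_cases h : y t <;> simp [h, hinner t, hl] <;> ring
    -- boundedness of the set
    have hbdd : BddAbove (Set.range fun w : {w : H // ‖w‖ ≤ 1} =>
        ∏ t : Fin T,
          (if y t then (⟪(w : H), x t⟫ + 1) / 2 else 1 - (⟪(w : H), x t⟫ + 1) / 2)) := by
      refine ⟨1, ?_⟩
      rintro _ ⟨w, rfl⟩
      have hb : ∀ t, |⟪(w : H), x t⟫| ≤ 1 := by
        intro t
        calc |⟪(w : H), x t⟫| ≤ ‖(w : H)‖ * ‖x t‖ := abs_real_inner_le_norm _ _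
          _ ≤ 1 := by rw [hx.1 t]; simpa using w.2
      refine Finset.prod_le_one (fun t _ => ?_) (fun t _ => ?_)
      · have := abs_le.mp (hb t); by_cases h : y t <;> simp [h] <;> linarith [this.1, this.2]
      · have := abs_le.mp (hb t); by_cases h : y t <;> simp [h] <;> linarith [this.1, this.2]
    calc ((1 + u) / 2) ^ T = _ := hval.symm
      _ ≤ _ := le_ciSup hbdd ⟨w₀, hnorm⟩
  have h1 : (1 + u) ^ T ≤ linShtarkov T x := by
    have : ∑ _y : Fin T → Bool, ((1 + u) / 2) ^ T ≤ linShtarkov T x :=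
      Finset.sum_le_sum (fun y _ => key y)
    have hcard : ∑ _y : Fin T → Bool, ((1 + u) / 2) ^ T
        = 2 ^ T * ((1 + u) / 2) ^ T := by
      simp [Finset.card_univ, mul_comm]
    calc (1 + u) ^ T = 2 ^ T * ((1 + u) / 2) ^ T := by
          rw [← mul_pow]; ring_nf
      _ ≤ linShtarkov T x := by rw [← hcard]; exact this
  have hpos : (0 : ℝ) < (1 + u) ^ T := by positivity
  have h2 : (T : ℝ) * Real.log (1 + u) ≤ Real.log (linShtarkov T x) := by
    calc (T : ℝ) * Real.log (1 + u) = Real.log ((1 + u) ^ T) := by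
          rw [Real.log_pow]
      _ ≤ Real.log (linShtarkov T x) := Real.log_le_log hpos h1
  refine ⟨h1, h2, le_trans ?_ h2⟩
  -- √T/4 ≤ T log(1+u)
  have hlog : u / 4 ≤ Real.log (1 + u) := by
    rw [Real.le_log_iff_exp_le (by linarith)]
    have hexp : Real.exp (u / 4) ≤ 1 / (1 - u / 4) := by
      have h14 : 1 - u / 4 > 0 := by linarith
      rw [le_div_iff₀ h14]
      have h := Real.add_one_le_exp (-(u / 4))
      have hne : Real.exp (u / 4) > 0 := Real.exp_pos _
      have hprod : Real.exp (u / 4) * Real.exp (-(u / 4)) = 1 := by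
        rw [← Real.exp_add]; simp
      nlinarith [mul_le_mul_of_nonneg_left h hne.le]
    calc Real.exp (u / 4) ≤ 1 / (1 - u / 4) := hexp
      _ ≤ 1 + u := by
          rw [div_le_iff₀ (by linarith)]
          nlinarith
  have hTu : (T : ℝ) * (u / 4) = Real.sqrt T / 4 := by
    have h := Real.mul_self_sqrt hT0.le
    rw [hu]; field_simp; nlinarith
  calc Real.sqrt T / 4 = (T : ℝ) * (u / 4) := hTu.symm
    _ ≤ (T : ℝ) * Real.log (1 + u) := by
        apply mul_le_mul_of_nonneg_left hlog hT0.le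
end

section
/- Fix t ∈ [T], x_{1:t} ∈ X^t, and y_{1:t-1} ∈ Y^{t-1}. For each y ∈ Y let g(y) = sup_x S_T(F, x | x_{1:t}, (y_{1:t-1}, y)), the supremum over context trees x of depth T−t, and assume Σ_{y ∈ Y} g(y) > 0. Then the contextual NML prediction p̂* ∈ Δ(Y) given by p̂*(y) = g(y) / Σ_{y' ∈ Y} g(y') attains the minimum over p ∈ Δ(Y) of max_{y ∈ Y} [ −log p(y) + log g(y) ], and this minimum value equals log Σ_{y ∈ Y} g(y); since G(F, x_{1:t}, (y_{1:t-1}, y)) = log g(y), the cNML prediction p̂* is the minimax optimal prediction at round t. -/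
open scoped BigOperators

namespace CNML

lemma negLog_ne_bot (x : ℝ) : negLog x ≠ ⊥ := by
  unfold negLog; split <;> simp

lemma neg_negLog (x : ℝ) : -negLog x = elog x := by
  unfold elog negLog; split <;> simp

lemma elog_mono : Monotone elog := by
  intro a b hab
  unfold elog
  split
  · exact bot_le
  · rename_i ha
    rw [if_neg (by intro hb; exact ha (hab.trans hb))]
    exact_mod_cast Real.log_le_log (by linarith) hab

lemma elog_pos_eq {x : ℝ} (hx : 0 < x) : elog x = ((Real.log x : ℝ) : EReal) := by
  rw [elog, if_neg (not_le.2 hx)]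

lemma elog_nonpos_eq {x : ℝ} (hx : x ≤ 0) : elog x = ⊥ := by
  rw [elog, if_pos hx]

lemma negLog_pos_eq {x : ℝ} (hx : 0 < x) : negLog x = ((-Real.log x : ℝ) : EReal) := by
  rw [negLog, if_neg (not_le.2 hx)]

lemma negLog_nonpos_eq {x : ℝ} (hx : x ≤ 0) : negLog x = ⊤ := by
  rw [negLog, if_pos hx]

lemma negLog_mul {a b : ℝ} (ha : 0 ≤ a) (hb : 0 ≤ b) :
    negLog (a * b) = negLog a + negLog b := by
  rcases ha.lt_or_eq with ha' | ha'
  · rcases hb.lt_or_eq with hb' | hb'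
    · rw [negLog_pos_eq (by positivity), negLog_pos_eq ha', negLog_pos_eq hb',
        Real.log_mul ha'.ne' hb'.ne']
      norm_cast
      ring
    · rw [← hb', mul_zero, negLog_nonpos_eq le_rfl]
      exact (EReal.add_top_of_ne_bot (negLog_ne_bot a)).symm
  · rw [← ha', zero_mul, negLog_nonpos_eq le_rfl]
    exact (EReal.top_add_of_ne_bot (negLog_ne_bot b)).symm

lemma negLog_prod {ι : Type*} (s : Finset ι) (f : ι → ℝ) (hf : ∀ i ∈ s, 0 ≤ f i) :
    negLog (∏ i ∈ s, f i) = ∑ i ∈ s, negLog (f i) := by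
  induction s using Finset.cons_induction with
  | empty => simp [negLog_pos_eq one_pos]
  | cons a s ha ih =>
    rw [Finset.prod_cons, Finset.sum_cons,
      negLog_mul (hf a (Finset.mem_cons_self a s))
        (Finset.prod_nonneg fun i hi => hf i (Finset.mem_cons_of_mem hi)),
      ih fun i hi => hf i (Finset.mem_cons_of_mem hi)]

lemma ereal_neg_iInf {ι : Sort*} (f : ι → EReal) : -(⨅ i, f i) = ⨆ i, -f i := by
  apply le_antisymm
  · rw [EReal.neg_le]
    apply le_iInf
    intro i
    rw [EReal.neg_le]
    exact le_iSup (fun i => -f i) i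
  · apply iSup_le
    intro i
    exact EReal.neg_le_neg_iff.2 (iInf_le f i)

lemma ereal_add_iSup {ι : Sort*} [Nonempty ι] {a : EReal} (ha : a ≠ ⊥) (f : ι → EReal) :
    a + ⨆ i, f i = ⨆ i, a + f i := by
  apply le_antisymm
  · rw [le_iSup_iff]
    intro b hb
    rcases eq_or_ne b ⊤ with rfl | hbt
    · exact le_top
    rcases eq_or_ne b ⊥ with rfl | hbb
    · have hfb : ∀ i, f i = ⊥ := by
        intro i
        have := hb i
        rw [le_bot_iff] at this
        rcases EReal.add_eq_bot_iff.1 this with h | h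
        · exact absurd h ha
        · exact h
      have : (⨆ i, f i) = ⊥ := by rw [iSup_eq_bot]; exact hfb
      rw [this, EReal.add_bot]
    rcases eq_or_ne a ⊤ with rfl | hat
    · by_cases hall : ∀ i, f i = ⊥
      · have : (⨆ i, f i) = ⊥ := by rw [iSup_eq_bot]; exact hall
        rw [this, EReal.add_bot]; exact bot_le
      · push_neg at hall
        obtain ⟨i, hi⟩ := hall
        have := hb i
        rw [EReal.top_add_of_ne_bot hi] at this
        exact le_top.trans this
    · have h1 : ∀ i, f i ≤ b - a := fun i =>
        (EReal.le_sub_iff_add_le (Or.inl ha) (Or.inr hbt)).2 (by rw [add_comm]; exact hb i)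
      have h2 : (⨆ i, f i) ≤ b - a := iSup_le h1
      lift a to ℝ using ⟨hat, ha⟩
      calc a + (⨆ i, f i) ≤ a + (b - a) := add_le_add_right h2 _
        _ = b := by rw [add_comm, EReal.sub_add_cancel]
  · apply iSup_le
    intro i
    exact add_le_add_right (le_iSup f i) a

lemma elog_ciSup {ι : Type*} [Nonempty ι] (L : ι → ℝ) (hbdd : BddAbove (Set.range L)) :
    ⨆ i, elog (L i) = elog (⨆ i, L i) := by
  apply le_antisymm
  · exact iSup_le fun i => elog_mono (le_ciSup hbdd i)
  · rw [le_iSup_iff]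
    intro b hb
    induction b with
    | bot =>
      have hL : ∀ i, L i ≤ 0 := by
        intro i
        by_contra h
        push_neg at h
        have := hb i
        rw [elog_pos_eq h, le_bot_iff] at this
        exact (EReal.coe_ne_bot _) this
      exact le_of_le_of_eq (elog_mono (ciSup_le hL)) (elog_nonpos_eq le_rfl)
    | coe c =>
      have hL : ∀ i, L i ≤ Real.exp c := by
        intro i
        rcases le_or_gt (L i) 0 with h | h
        · exact h.trans (Real.exp_pos c).le
        · have := hb i
          rw [elog_pos_eq h] at this
          rw [← Real.exp_log h]
          exact Real.exp_le_exp.2 (by exact_mod_cast this)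
      have hsup : (⨆ i, L i) ≤ Real.exp c := ciSup_le hL
      rcases le_or_gt (⨆ i, L i) 0 with h | h
      · rw [elog_nonpos_eq h]; exact bot_le
      · rw [elog_pos_eq h]
        exact_mod_cast (Real.log_le_iff_le_exp h).2 hsup
    | top => exact le_top

lemma sum_ciSup_le {ι κ : Type*} [Nonempty κ] (s : Finset ι) (h : ι → κ → ℝ)
    {target : ℝ} (hT : ∀ c : ι → κ, (∑ i ∈ s, h i (c i)) ≤ target) :
    (∑ i ∈ s, ⨆ k, h i k) ≤ target := by
  refine le_of_forall_pos_le_add fun ε hε => ?_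
  set n : ℕ := s.card + 1 with hn
  have hδ : 0 < ε / n := by positivity
  have hch : ∀ i : ι, ∃ k : κ, (⨆ k', h i k') - ε / n < h i k := by
    intro i
    exact exists_lt_of_lt_ciSup (show (⨆ k', h i k') - ε / n < ⨆ k', h i k' by linarith)
  choose c hc using hch
  calc (∑ i ∈ s, ⨆ k, h i k) ≤ ∑ i ∈ s, (h i (c i) + ε / n) := by
        refine Finset.sum_le_sum fun i _ => ?_
        have := hc i
        linarith
    _ = (∑ i ∈ s, h i (c i)) + s.card * (ε / n) := by
        rw [Finset.sum_add_distrib, Finset.sum_const, nsmul_eq_mul]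
    _ ≤ target + ε := by
        have h1 := hT c
        have h2 : (s.card : ℝ) * (ε / n) ≤ ε := by
          have hc1 : (0:ℝ) ≤ (s.card : ℝ) := Nat.cast_nonneg _
          have hp : (0:ℝ) < (n : ℝ) := by positivity
          rw [← mul_div_assoc, div_le_iff₀ hp]
          have hcn : (s.card : ℝ) ≤ (n : ℝ) := by
            rw [hn]; push_cast; linarith
          nlinarith
        linarith

lemma loss_term_bot {Y : Type*} [Fintype Y] (p : Simplex Y) (y : Y) {g : ℝ} (hg : g ≤ 0) :
    logloss p y + elog g = ⊥ := by
  rw [elog_nonpos_eq hg, EReal.add_bot]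

lemma pstar_value {Y : Type*} [Fintype Y] [Nonempty Y] (g : Y → ℝ)
    (hpos : 0 < ∑ y, g y) (pstar : Simplex Y) (hpstar : ∀ y, pstar.1 y = g y / ∑ y', g y') :
    (⨆ y : Y, (logloss pstar y + elog (g y))) = elog (∑ y, g y) := by
  have hterm : ∀ y : Y, logloss pstar y + elog (g y) =
      if 0 < g y then elog (∑ y', g y') else ⊥ := by
    intro y
    rcases lt_or_ge 0 (g y) with h | h
    · rw [if_pos h, logloss, hpstar, negLog_pos_eq (by positivity), elog_pos_eq h,
        elog_pos_eq hpos, Real.log_div h.ne' hpos.ne', ← EReal.coe_add]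
      norm_num
    · rw [if_neg (not_lt.2 h), loss_term_bot _ _ h]
  obtain ⟨y0, hy0⟩ : ∃ y : Y, 0 < g y := by
    by_contra hcon
    push_neg at hcon
    have : (∑ y, g y) ≤ 0 := Finset.sum_nonpos fun y _ => hcon y
    linarith
  apply le_antisymm
  · refine iSup_le fun y => ?_
    rw [hterm y]
    split
    · exact le_rfl
    · exact bot_le
  · calc elog (∑ y, g y) = logloss pstar y0 + elog (g y0) := by rw [hterm y0, if_pos hy0]
      _ ≤ _ := le_iSup (fun y => logloss pstar y + elog (g y)) y0

lemma value_lower {Y : Type*} [Fintype Y] [Nonempty Y] (g : Y → ℝ) (hg : ∀ y, 0 ≤ g y)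
    (p : Simplex Y) :
    elog (∑ y, g y) ≤ ⨆ y : Y, (logloss p y + elog (g y)) := by
  rcases le_or_gt (∑ y, g y) 0 with hS | hS
  · rw [elog_nonpos_eq hS]; exact bot_le
  set S := ∑ y, g y with hSdef
  by_cases htop : ∃ y, 0 < g y ∧ p.1 y ≤ 0
  · obtain ⟨y, hgy, hpy⟩ := htop
    have : logloss p y + elog (g y) = ⊤ := by
      rw [logloss, negLog_nonpos_eq hpy, EReal.top_add_of_ne_bot]
      rw [elog_pos_eq hgy]
      exact EReal.coe_ne_bot _
    calc elog S ≤ ⊤ := le_top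
      _ = logloss p y + elog (g y) := this.symm
      _ ≤ _ := le_iSup (fun y => logloss p y + elog (g y)) y
  push_neg at htop
  by_contra hcon
  push_neg at hcon
  have hlt : ∀ y : Y, 0 < g y → g y < S * p.1 y := by
    intro y hgy
    have hpy : 0 < p.1 y := htop y hgy
    have h1 : logloss p y + elog (g y) < elog S :=
      lt_of_le_of_lt (le_iSup (fun y => logloss p y + elog (g y)) y) hcon
    rw [logloss, negLog_pos_eq hpy, elog_pos_eq hgy, elog_pos_eq hS, ← EReal.coe_add,
      EReal.coe_lt_coe_iff] at h1
    have h2 : Real.log (g y / p.1 y) < Real.log S := by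
      rw [Real.log_div hgy.ne' hpy.ne']; linarith
    have h3 : g y / p.1 y < S := by
      have := Real.exp_lt_exp.2 h2
      rwa [Real.exp_log (by positivity), Real.exp_log hS] at this
    calc g y = (g y / p.1 y) * p.1 y := by field_simp
      _ < S * p.1 y := mul_lt_mul_of_pos_right h3 hpy
  have hle : ∀ y : Y, g y ≤ S * p.1 y := by
    intro y
    rcases lt_or_ge 0 (g y) with h | h
    · exact (hlt y h).le
    · have : 0 ≤ S * p.1 y := mul_nonneg hS.le (p.2.1 y)
      linarith
  obtain ⟨y0, hy0⟩ : ∃ y : Y, 0 < g y := by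
    by_contra hcon2
    push_neg at hcon2
    have : S ≤ 0 := Finset.sum_nonpos fun y _ => hcon2 y
    linarith
  have : S < S := by
    calc S = ∑ y, g y := rfl
      _ < ∑ y, S * p.1 y :=
          Finset.sum_lt_sum (fun y _ => hle y) ⟨y0, Finset.mem_univ y0, hlt y0 hy0⟩
      _ = S * ∑ y, p.1 y := by rw [Finset.mul_sum]
      _ = S := by rw [p.2.2, mul_one]
  exact lt_irrefl S this

lemma minimax_exists {Y : Type*} [Fintype Y] [Nonempty Y] (g : Y → ℝ) (hg : ∀ y, 0 ≤ g y) :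
    ∃ p0 : Simplex Y, (⨆ y : Y, (logloss p0 y + elog (g y))) = elog (∑ y, g y) := by
  rcases lt_or_ge 0 (∑ y, g y) with hS | hS
  · refine ⟨⟨fun y => g y / ∑ y', g y', fun y => div_nonneg (hg y) hS.le, ?_⟩, ?_⟩
    · rw [← Finset.sum_div, div_self hS.ne']
    · exact pstar_value g hS _ fun y => rfl
  · have hz : ∀ y : Y, g y = 0 := by
      intro y
      have h1 : (∑ y', g y') ≤ 0 := hS
      have h2 : g y ≤ ∑ y', g y' :=
        Finset.single_le_sum (fun y' _ => hg y') (Finset.mem_univ y)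
      exact le_antisymm (by linarith) (hg y)
    have hS0 : (∑ y, g y) = 0 := by simp [hz]
    refine ⟨⟨fun _ => (Fintype.card Y : ℝ)⁻¹, fun _ => by positivity, by
      rw [Finset.sum_const, nsmul_eq_mul, Finset.card_univ,
        mul_inv_cancel₀ (by exact_mod_cast Fintype.card_ne_zero)]⟩, ?_⟩
    rw [hS0, elog_nonpos_eq le_rfl]
    refine le_antisymm (iSup_le fun y => ?_) bot_le
    rw [hz y, loss_term_bot _ _ le_rfl]

section Aux
variable {X Y : Type*} [Fintype Y] [Inhabited Y]

lemma likelihood_nonneg (f : Expert X Y) (xs : List X) (ys : List Y) :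
    0 ≤ likelihood f xs ys :=
  Finset.prod_nonneg fun t _ => (f (xs.take (t+1)) (ys.take t)).2.1 _

lemma likelihood_le_one (f : Expert X Y) (xs : List X) (ys : List Y) :
    likelihood f xs ys ≤ 1 := by
  refine Finset.prod_le_one (fun t _ => (f (xs.take (t+1)) (ys.take t)).2.1 _) fun t _ => ?_
  set p := f (xs.take (t+1)) (ys.take t)
  calc p.1 (ys.getD t default) ≤ ∑ y, p.1 y :=
        Finset.single_le_sum (fun y _ => p.2.1 y) (Finset.mem_univ _)
    _ = 1 := p.2.2

lemma cumLoss_eq (f : Expert X Y) (xs : List X) (ys : List Y) :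
    cumLoss f xs ys = negLog (likelihood f xs ys) := by
  rw [cumLoss, likelihood, negLog_prod]
  · rfl
  · exact fun t _ => (f (xs.take (t+1)) (ys.take t)).2.1 _

omit [Fintype Y] [Inhabited Y] in
lemma treePath_cons (χ : List Y → X) (y : Y) (L : List Y) :
    treePath χ (y :: L) = χ [] :: treePath (fun m => χ (y :: m)) L := by
  simp only [treePath, List.length_cons, List.range_succ_eq_map, List.map_cons, List.take_zero,
    List.map_map]
  congr 1

lemma shtarkovPrefix_zero (F : Set (Expert X Y)) (χ : List Y → X) (xs : List X) (ys : List Y) :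
    shtarkovPrefix F 0 χ xs ys = ⨆ f : F, likelihood (f : Expert X Y) xs ys := by
  rw [shtarkovPrefix]
  rw [Fintype.sum_unique]
  simp [treePath]

lemma shtarkovPrefix_succ (F : Set (Expert X Y)) (r : ℕ) (χ : List Y → X) (xs : List X)
    (ys : List Y) :
    shtarkovPrefix F (r+1) χ xs ys =
      ∑ y : Y, shtarkovPrefix F r (fun l => χ (y :: l)) (xs ++ [χ []]) (ys ++ [y]) := by
  rw [shtarkovPrefix]
  rw [← (Fin.consEquiv fun _ : Fin (r+1) => Y).sum_comp, Fintype.sum_prod_type]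
  refine Finset.sum_congr rfl fun y _ => ?_
  rw [shtarkovPrefix]
  refine Finset.sum_congr rfl fun w _ => ?_
  have hofn : List.ofFn (Fin.cons y w : ∀ _ : Fin (r+1), Y) = y :: List.ofFn w := by
    simp [List.ofFn_succ]
  show (⨆ f : F, likelihood (f : Expert X Y)
      (xs ++ treePath χ (List.ofFn (Fin.cons y w))) (ys ++ List.ofFn (Fin.cons y w))) = _
  rw [hofn, treePath_cons]
  simp only [List.append_assoc, List.singleton_append, List.cons_append, List.nil_append]

variable {F : Set (Expert X Y)}

lemma bdd_likelihood (F : Set (Expert X Y)) (xs : List X) (ys : List Y) :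
    BddAbove (Set.range fun f : F => likelihood (f : Expert X Y) xs ys) := by
  refine ⟨1, ?_⟩
  rintro z ⟨f, rfl⟩
  exact likelihood_le_one _ _ _

lemma shp_nonneg (F : Set (Expert X Y)) (r : ℕ) (χ : List Y → X) (xs : List X) (ys : List Y) :
    0 ≤ shtarkovPrefix F r χ xs ys :=
  Finset.sum_nonneg fun _y _ => Real.iSup_nonneg fun _f => likelihood_nonneg _ _ _

lemma shp_le (hF : F.Nonempty) (r : ℕ) (χ : List Y → X) (xs : List X) (ys : List Y) :
    shtarkovPrefix F r χ xs ys ≤ (Fintype.card Y : ℝ) ^ r := by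
  have : Nonempty F := hF.to_subtype
  calc shtarkovPrefix F r χ xs ys ≤ ∑ _y : Fin r → Y, (1:ℝ) :=
        Finset.sum_le_sum fun y _ => ciSup_le fun f => likelihood_le_one _ _ _
    _ = (Fintype.card Y : ℝ) ^ r := by
        rw [Finset.sum_const, nsmul_eq_mul, mul_one]
        simp [Fintype.card_fun]

lemma bdd_shp (hF : F.Nonempty) (r : ℕ) (xs : List X) (ys : List Y) :
    BddAbove (Set.range fun χ : List Y → X => shtarkovPrefix F r χ xs ys) := by
  refine ⟨(Fintype.card Y : ℝ) ^ r, ?_⟩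
  rintro z ⟨χ, rfl⟩
  exact shp_le hF r χ xs ys

lemma supchi_nonneg (F : Set (Expert X Y)) (r : ℕ) (xs : List X) (ys : List Y) :
    0 ≤ ⨆ χ : List Y → X, shtarkovPrefix F r χ xs ys :=
  Real.iSup_nonneg fun χ => shp_nonneg F r χ xs ys

lemma supchi_le [Nonempty X] (hF : F.Nonempty) (r : ℕ) (xs : List X) (ys : List Y) :
    (⨆ χ : List Y → X, shtarkovPrefix F r χ xs ys) ≤ (Fintype.card Y : ℝ) ^ r :=
  ciSup_le fun χ => shp_le hF r χ xs ys

lemma key_sup [Nonempty X] (hF : F.Nonempty) (r : ℕ) (xs : List X) (ys : List Y) :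
    (⨆ x : X, ∑ y : Y, ⨆ χ : List Y → X, shtarkovPrefix F r χ (xs ++ [x]) (ys ++ [y])) =
      ⨆ χ : List Y → X, shtarkovPrefix F (r+1) χ xs ys := by
  apply le_antisymm
  · refine ciSup_le fun x => ?_
    refine sum_ciSup_le Finset.univ _ ?_
    intro c
    set χ' : List Y → X := fun l => match l with
      | [] => x
      | y :: m => c y m with hχ'
    have hdec : (∑ y : Y, shtarkovPrefix F r (c y) (xs ++ [x]) (ys ++ [y])) =
        shtarkovPrefix F (r+1) χ' xs ys := by
      rw [shtarkovPrefix_succ]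
    exact hdec.le.trans (le_ciSup (bdd_shp hF (r+1) xs ys) χ')
  · refine ciSup_le fun χ => ?_
    rw [shtarkovPrefix_succ]
    have h1 : (∑ y : Y, shtarkovPrefix F r (fun l => χ (y :: l)) (xs ++ [χ []]) (ys ++ [y])) ≤
        ∑ y : Y, ⨆ χ' : List Y → X, shtarkovPrefix F r χ' (xs ++ [χ []]) (ys ++ [y]) :=
      Finset.sum_le_sum fun y _ => le_ciSup (bdd_shp hF r _ _) (fun l => χ (y :: l))
    refine h1.trans
      (le_ciSup (f := fun x : X => ∑ y : Y, ⨆ χ' : List Y → X,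
        shtarkovPrefix F r χ' (xs ++ [x]) (ys ++ [y])) ?_ (χ []))
    refine ⟨(Fintype.card Y : ℝ) * (Fintype.card Y : ℝ) ^ r, ?_⟩
    rintro z ⟨x, rfl⟩
    calc (∑ y : Y, ⨆ χ' : List Y → X, shtarkovPrefix F r χ' (xs ++ [x]) (ys ++ [y])) ≤
          ∑ _y : Y, (Fintype.card Y : ℝ) ^ r :=
        Finset.sum_le_sum fun y _ => supchi_le hF r _ _
      _ = _ := by rw [Finset.sum_const, nsmul_eq_mul]; simp

lemma valToGo_eq [Nonempty X] (hF : F.Nonempty) :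
    ∀ (r : ℕ) (xs : List X) (ys : List Y) (acc : EReal), acc ≠ ⊥ →
      valToGo F r xs ys acc = acc + elog (⨆ χ : List Y → X, shtarkovPrefix F r χ xs ys) := by
  have : Nonempty F := hF.to_subtype
  intro r
  induction r with
  | zero =>
    intro xs ys acc hacc
    have h1 : (⨆ χ : List Y → X, shtarkovPrefix F 0 χ xs ys) =
        ⨆ f : F, likelihood (f : Expert X Y) xs ys := by
      have : ∀ χ : List Y → X, shtarkovPrefix F 0 χ xs ys =
          ⨆ f : F, likelihood (f : Expert X Y) xs ys := fun χ => shtarkovPrefix_zero F χ xs ys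
      simp only [this]
      exact ciSup_const
    rw [valToGo, h1, sub_eq_add_neg]
    congr 1
    have h2 : ∀ f : F, cumLoss (f : Expert X Y) xs ys =
        negLog (likelihood (f : Expert X Y) xs ys) := fun f => cumLoss_eq _ _ _
    calc -(⨅ f : F, cumLoss (f : Expert X Y) xs ys)
        = ⨆ f : F, -cumLoss (f : Expert X Y) xs ys := ereal_neg_iInf _
      _ = ⨆ f : F, elog (likelihood (f : Expert X Y) xs ys) := by
          refine iSup_congr fun f => ?_
          rw [h2 f, neg_negLog]
      _ = elog (⨆ f : F, likelihood (f : Expert X Y) xs ys) :=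
          elog_ciSup _ (bdd_likelihood F xs ys)
  | succ r ih =>
    intro xs ys acc hacc
    rw [valToGo]
    have hstep : ∀ (x : X) (p : Simplex Y) (y : Y),
        valToGo F r (xs ++ [x]) (ys ++ [y]) (acc + logloss p y) =
          acc + (logloss p y +
            elog (⨆ χ : List Y → X, shtarkovPrefix F r χ (xs ++ [x]) (ys ++ [y]))) := by
      intro x p y
      rw [ih (xs ++ [x]) (ys ++ [y]) (acc + logloss p y)
        (by
          intro hb
          rcases EReal.add_eq_bot_iff.1 hb with h | h
          · exact hacc h
          · exact negLog_ne_bot _ h),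
        add_assoc]
    have hinner : ∀ x : X, (⨅ p : Simplex Y, ⨆ y : Y,
        valToGo F r (xs ++ [x]) (ys ++ [y]) (acc + logloss p y)) =
          acc + elog (∑ y : Y, ⨆ χ : List Y → X,
            shtarkovPrefix F r χ (xs ++ [x]) (ys ++ [y])) := by
      intro x
      set G : Y → ℝ := fun y => ⨆ χ : List Y → X, shtarkovPrefix F r χ (xs ++ [x]) (ys ++ [y])
        with hG
      have hGnn : ∀ y, 0 ≤ G y := fun y => supchi_nonneg F r _ _
      obtain ⟨p0, hp0⟩ := minimax_exists G hGnn
      have hps : ∀ p : Simplex Y, (⨆ y : Y, valToGo F r (xs ++ [x]) (ys ++ [y])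
          (acc + logloss p y)) = acc + ⨆ y : Y, (logloss p y + elog (G y)) := by
        intro p
        have : ∀ y : Y, valToGo F r (xs ++ [x]) (ys ++ [y]) (acc + logloss p y) =
            acc + (logloss p y + elog (G y)) := fun y => hstep x p y
        simp only [this]
        exact (ereal_add_iSup hacc _).symm
      apply le_antisymm
      · refine iInf_le_of_le p0 ?_
        rw [hps p0, hp0]
      · refine le_iInf fun p => ?_
        rw [hps p]
        exact add_le_add_right (value_lower G hGnn p) acc
    simp only [hinner]
    rw [← ereal_add_iSup hacc, elog_ciSup _ ?bdd, key_sup hF r xs ys]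
    case bdd =>
      refine ⟨(Fintype.card Y : ℝ) * (Fintype.card Y : ℝ) ^ r, ?_⟩
      rintro z ⟨x, rfl⟩
      calc (∑ y : Y, ⨆ χ : List Y → X, shtarkovPrefix F r χ (xs ++ [x]) (ys ++ [y])) ≤
            ∑ _y : Y, (Fintype.card Y : ℝ) ^ r :=
          Finset.sum_le_sum fun y _ => supchi_le hF r _ _
        _ = _ := by rw [Finset.sum_const, nsmul_eq_mul]; simp

end Aux
end CNML

open CNML in
/-- Fix `t ∈ [T]`, `x_{1:t} ∈ X^t` and `y_{1:t-1} ∈ Y^{t-1}`.  For `y ∈ Y`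
let `g(y) = sup_χ S_T(F, χ | x_{1:t}, (y_{1:t-1}, y))`, supremum over context trees `χ` of
depth `T − t`, and suppose `Σ_y g(y) > 0`.  Then the contextual NML prediction
`p̂*(y) = g(y) / Σ_{y'} g(y')` attains the minimum over `p ∈ Δ(Y)` of
`max_y [−log p(y) + log g(y)]`, this minimum value equals `log Σ_y g(y)`, and — since
`G(F, x_{1:t}, (y_{1:t-1}, y)) = log g(y)` — `p̂*` is the minimax optimal prediction at
round `t`, i.e. it minimizes `p ↦ max_y [ℓ(p, y) + G(F, x_{1:t}, (y_{1:t-1}, y))]`. -/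
theorem cnml_minimax_optimal
    {X Y : Type*} [Fintype Y] [Inhabited Y] [Nonempty X]
    (F : Set (Expert X Y)) (hF : F.Nonempty) (T t : ℕ) (ht1 : 1 ≤ t) (ht : t ≤ T)
    (xs : List X) (ys : List Y) (hxs : xs.length = t) (hys : ys.length = t - 1)
    (g : Y → ℝ)
    (hg : ∀ y, g y = ⨆ χ : List Y → X, shtarkovPrefix F (T - t) χ xs (ys ++ [y]))
    (hpos : 0 < ∑ y, g y)
    (pstar : Simplex Y) (hpstar : ∀ y, pstar.1 y = g y / ∑ y', g y') :
    (⨆ y : Y, (logloss pstar y + elog (g y))) = elog (∑ y, g y) ∧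
    (∀ p : Simplex Y,
      (⨆ y : Y, (logloss pstar y + elog (g y))) ≤ ⨆ y : Y, (logloss p y + elog (g y))) ∧
    (∀ p : Simplex Y,
      (⨆ y : Y, (logloss pstar y + valToGo F (T - t) xs (ys ++ [y]) 0)) ≤
        ⨆ y : Y, (logloss p y + valToGo F (T - t) xs (ys ++ [y]) 0)) := by
  have hgnn : ∀ y : Y, 0 ≤ g y := by
    intro y
    rw [hg y]
    exact CNML.supchi_nonneg F (T - t) xs (ys ++ [y])
  have h1 : (⨆ y : Y, (logloss pstar y + elog (g y))) = elog (∑ y, g y) :=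
    CNML.pstar_value g hpos pstar hpstar
  have h2 : ∀ p : Simplex Y,
      (⨆ y : Y, (logloss pstar y + elog (g y))) ≤ ⨆ y : Y, (logloss p y + elog (g y)) := by
    intro p
    rw [h1]
    exact CNML.value_lower g hgnn p
  refine ⟨h1, h2, ?_⟩
  have hval : ∀ y : Y, valToGo F (T - t) xs (ys ++ [y]) 0 = elog (g y) := by
    intro y
    rw [CNML.valToGo_eq hF (T - t) xs (ys ++ [y]) 0 (by norm_num), zero_add, ← hg y]
  intro p
  simp only [hval]
  exact h2 p
end
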